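/- For any fixed τ > 0 and any Borel measurable encoder f : ℝⁿ → S^{m−1}, as the number of negative samples M → ∞, the normalized contrastive loss converges: lim_{M→∞} (L_contr(f;τ,M) − log M) = −(1/τ) E_{(x,y)∼p_pos}[f(x)·f(y)] + E_{x∼p_data}[log E_{x⁻∼p_data}[e^{f(x⁻)·f(x)/τ}]]. -/

import Mathlib

open MeasureTheory Real Filter Metric
open scoped RealInnerProductSpace ENNReal Topology BigOperators

noncomputable section

/-- `ℝ^n` as a Euclidean space. -/
abbrev Euc (n : ℕ) : Type := EuclideanSpace ℝ (Fin n)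

/-- The unit sphere in `ℝ^m`; the sphere `S^d` of the informal statement is `Sph (d+1)`. -/
abbrev Sph (m : ℕ) := Metric.sphere (0 : Euc m) 1

/-- The uniform (normalized surface-area) probability measure on the unit sphere of `ℝ^m`. -/
noncomputable def unifSphere (m : ℕ) : Measure (Sph m) :=
  ((volume : Measure (Euc m)).toSphere Set.univ)⁻¹ • (volume : Measure (Euc m)).toSphere

/-- The contrastive loss `L_contr(f; τ, M)` with `M` i.i.d. negative samples. -/
noncomputable def contrLoss {n m : ℕ} (pdata : Measure (Euc n)) (ppos : Measure (Euc n × Euc n))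
    (f : Euc n → Sph m) (τ : ℝ) (M : ℕ) : ℝ :=
  ∫ xy, ∫ xneg : Fin M → Euc n,
      -Real.log
        (Real.exp (⟪(f xy.1 : Euc m), (f xy.2 : Euc m)⟫ / τ) /
          (Real.exp (⟪(f xy.1 : Euc m), (f xy.2 : Euc m)⟫ / τ) +
            ∑ i : Fin M, Real.exp (⟪(f (xneg i) : Euc m), (f xy.2 : Euc m)⟫ / τ)))
    ∂(Measure.pi fun _ : Fin M => pdata) ∂ppos



lemma aux_abs_log_sub_log_le {a u v : ℝ} (ha : 0 < a) (hu : a ≤ u) (hv : a ≤ v) :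
    |Real.log u - Real.log v| ≤ |u - v| / a := by
  have key : ∀ s t : ℝ, a ≤ s → a ≤ t → s ≤ t → Real.log t - Real.log s ≤ (t - s) / a := by
    intro s t hs ht hst
    have hs0 : 0 < s := lt_of_lt_of_le ha hs
    have ht0 : 0 < t := lt_of_lt_of_le ha ht
    have h1 : Real.log t - Real.log s = Real.log (t / s) :=
      (Real.log_div ht0.ne' hs0.ne').symm
    have h2 : Real.log (t / s) ≤ t / s - 1 := Real.log_le_sub_one_of_pos (by positivity)
    have h3 : t / s - 1 = (t - s) / s := by field_simp
    have h4 : (t - s) / s ≤ (t - s) / a :=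
      div_le_div_of_nonneg_left (by linarith) ha hs
    linarith
  rcases le_total u v with h | h
  · have h1 := key u v hu hv h
    have h2 : 0 ≤ Real.log v - Real.log u := by
      have := Real.log_le_log (lt_of_lt_of_le ha hu) h
      linarith
    rw [abs_sub_comm, abs_of_nonneg h2, abs_sub_comm, abs_of_nonneg (by linarith)]
    exact h1
  · have h1 := key v u hv hu h
    have h2 : 0 ≤ Real.log u - Real.log v := by
      have := Real.log_le_log (lt_of_lt_of_le ha hv) h
      linarith
    rw [abs_of_nonneg h2, abs_of_nonneg (by linarith)]
    exact h1

lemma aux_abs_le_eps {z ε : ℝ} (hε : 0 < ε) : |z| ≤ ε + z ^ 2 / ε := by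
  have h2 : ε + z ^ 2 / ε = (ε ^ 2 + z ^ 2) / ε := by field_simp
  rw [h2, le_div_iff₀ hε]
  nlinarith [sq_nonneg (|z| - ε), sq_abs z, abs_nonneg z]

lemma aux_abs_log_le {a u C : ℝ} (ha : 0 < a) (h1 : a ≤ u) (h2 : u ≤ C) :
    |Real.log u| ≤ |Real.log a| + |Real.log C| := by
  have l1 : Real.log a ≤ Real.log u := Real.log_le_log ha h1
  have l2 : Real.log u ≤ Real.log C := Real.log_le_log (ha.trans_le h1) h2
  rw [abs_le]
  constructor
  · have := neg_abs_le (Real.log a)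
    have := abs_nonneg (Real.log C)
    linarith
  · have := le_abs_self (Real.log C)
    have := abs_nonneg (Real.log a)
    linarith

lemma aux_integrable_of_abs_le {α : Type*} [MeasurableSpace α] {μ : Measure α}
    [IsFiniteMeasure μ] {h : α → ℝ} (hm : AEStronglyMeasurable h μ) {C : ℝ}
    (hb : ∀ x, |h x| ≤ C) : Integrable h μ :=
  Integrable.mono' (integrable_const C) hm
    (Filter.Eventually.of_forall fun x => by simpa [Real.norm_eq_abs] using hb x)
lemma aux_integral_pi_eval_sq {α : Type*} [MeasurableSpace α] (μ : Measure α)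
    [IsProbabilityMeasure μ] {M : ℕ} (h : α → ℝ) (i : Fin M) :
    ∫ x : Fin M → α, (h (x i)) ^ 2 ∂(Measure.pi fun _ => μ) = ∫ t, (h t) ^ 2 ∂μ := by
  letI : MeasureSpace α := ⟨μ⟩
  haveI : SigmaFinite (volume : Measure α) := (inferInstance : SigmaFinite μ)
  have hvol : (volume : Measure (Fin M → α)) = Measure.pi fun _ => μ := rfl
  have key := MeasureTheory.integral_fintype_prod_eq_prod (𝕜 := ℝ) (ι := Fin M) (E := fun _ => α) (μ := fun _ => μ)
    (fun k t => if i = k then (h t) ^ 2 else 1)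
  rw [← hvol] at key
  rw [← hvol]
  have lhs : (fun x : Fin M → α => ∏ k, (if i = k then (h (x k)) ^ 2 else 1))
      = fun x : Fin M → α => (h (x i)) ^ 2 := by
    funext x
    simp [Finset.prod_ite_eq]
  rw [show (∫ x : Fin M → α, (h (x i))^2) = ∫ x : Fin M → α, ∏ k, (if i = k then (h (x k))^2 else 1) by
    rw [lhs]]
  rw [key, Finset.prod_eq_single i]
  · simp only [if_pos rfl]
    rfl
  · intro k _ hk
    simp [Ne.symm hk]
  · simp

lemma aux_integral_pi_eval_mul_ne {α : Type*} [MeasurableSpace α] (μ : Measure α)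
    [IsProbabilityMeasure μ] {M : ℕ} (h : α → ℝ) (i j : Fin M) (hij : i ≠ j)
    (h0 : ∫ t, h t ∂μ = 0) :
    ∫ x : Fin M → α, h (x i) * h (x j) ∂(Measure.pi fun _ => μ) = 0 := by
  letI : MeasureSpace α := ⟨μ⟩
  haveI : SigmaFinite (volume : Measure α) := (inferInstance : SigmaFinite μ)
  have hvol : (volume : Measure (Fin M → α)) = Measure.pi fun _ => μ := rfl
  have key := MeasureTheory.integral_fintype_prod_eq_prod (𝕜 := ℝ) (ι := Fin M) (E := fun _ => α) (μ := fun _ => μ)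
    (fun k t => (if i = k then h t else 1) * (if j = k then h t else 1))
  rw [← hvol] at key
  rw [← hvol]
  have lhs : (fun x : Fin M → α =>
      ∏ k, ((if i = k then h (x k) else 1) * (if j = k then h (x k) else 1)))
      = fun x : Fin M → α => h (x i) * h (x j) := by
    funext x
    rw [Finset.prod_mul_distrib]
    simp [Finset.prod_ite_eq]
  rw [show (∫ x : Fin M → α, h (x i) * h (x j))
      = ∫ x : Fin M → α, ∏ k, ((if i = k then h (x k) else 1) * (if j = k then h (x k) else 1)) by
    rw [lhs]]
  rw [key]
  apply Finset.prod_eq_zero (Finset.mem_univ i)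
  have hji : j ≠ i := Ne.symm hij
  simp only [if_neg hji, mul_one, eq_self_iff_true, if_true]
  exact h0

lemma aux_integral_pi_sum_sq {α : Type*} [MeasurableSpace α] (μ : Measure α)
    [IsProbabilityMeasure μ] (M : ℕ) (h : α → ℝ) (hm : Measurable h) {b : ℝ}
    (hb0 : 0 ≤ b) (hb : ∀ x, |h x| ≤ b) (h0 : ∫ t, h t ∂μ = 0) :
    ∫ x : Fin M → α, (∑ i, h (x i)) ^ 2 ∂(Measure.pi fun _ => μ) ≤ M * b ^ 2 := by
  have hint : ∀ i j : Fin M,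
      Integrable (fun x : Fin M → α => h (x i) * h (x j)) (Measure.pi fun _ => μ) := by
    intro i j
    exact aux_integrable_of_abs_le
      (((hm.comp (measurable_pi_apply i)).mul (hm.comp (measurable_pi_apply j))).aestronglyMeasurable)
      (C := b * b) (fun x => by
        rw [abs_mul]
        exact mul_le_mul (hb _) (hb _) (abs_nonneg _) hb0)
  have expand : (fun x : Fin M → α => (∑ i, h (x i)) ^ 2)
      = fun x : Fin M → α => ∑ i : Fin M, ∑ j : Fin M, h (x i) * h (x j) := by
    funext x
    rw [sq, Finset.sum_mul_sum]
  rw [expand]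
  rw [integral_finset_sum _ (fun i _ => integrable_finset_sum _ (fun j _ => hint i j))]
  have : ∀ i : Fin M, ∫ x : Fin M → α, ∑ j : Fin M, h (x i) * h (x j) ∂(Measure.pi fun _ => μ)
      = ∫ t, (h t) ^ 2 ∂μ := by
    intro i
    rw [integral_finset_sum _ (fun j _ => hint i j)]
    rw [Finset.sum_eq_single i]
    · have : (fun x : Fin M → α => h (x i) * h (x i)) = fun x : Fin M → α => (h (x i)) ^ 2 := by
        funext x; ring
      rw [this, aux_integral_pi_eval_sq μ h i]
    · intro j _ hji
      exact aux_integral_pi_eval_mul_ne μ h i j (Ne.symm hji) h0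
    · simp
  simp_rw [this]
  rw [Finset.sum_const, Finset.card_univ, Fintype.card_fin, nsmul_eq_mul]
  have hsq : ∫ t, (h t) ^ 2 ∂μ ≤ b ^ 2 := by
    have : ∫ t, (h t) ^ 2 ∂μ ≤ ∫ _t, b ^ 2 ∂μ := by
      apply integral_mono
      · exact aux_integrable_of_abs_le ((hm.pow_const 2).aestronglyMeasurable)
          (C := b ^ 2) (fun x => by
            have h1 : |h x| ^ 2 ≤ b ^ 2 := pow_le_pow_left₀ (abs_nonneg _) (hb x) 2
            rw [abs_of_nonneg (sq_nonneg _)]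
            simpa [sq_abs] using h1)
      · exact integrable_const _
      · intro x
        have h1 : |h x| ^ 2 ≤ b ^ 2 := pow_le_pow_left₀ (abs_nonneg _) (hb x) 2
        simpa [sq_abs] using h1
    simpa using this
  exact mul_le_mul_of_nonneg_left hsq (Nat.cast_nonneg M)

def auxInner {α : Type*} [MeasurableSpace α] (pdata : Measure α) (S : α × α → ℝ)
    (τ : ℝ) (M : ℕ) (xy : α × α) : ℝ :=
  ∫ xneg : Fin M → α,
    Real.log ((Real.exp (S xy / τ) + ∑ i : Fin M, Real.exp (S (xneg i, xy.2) / τ)) / M)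
    ∂(Measure.pi fun _ : Fin M => pdata)

def auxMu {α : Type*} [MeasurableSpace α] (pdata : Measure α) (S : α × α → ℝ)
    (τ : ℝ) (y : α) : ℝ :=
  ∫ x', Real.exp (S (x', y) / τ) ∂pdata

theorem aux_main {α : Type*} [MeasurableSpace α] (pdata : Measure α)
    (ppos : Measure (α × α)) [IsProbabilityMeasure pdata] [IsProbabilityMeasure ppos]
    (hsnd : ppos.map Prod.snd = pdata)
    (S : α × α → ℝ) (hSm : Measurable S) (hSb : ∀ p, |S p| ≤ 1)
    (τ : ℝ) (hτ : 0 < τ) :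
    Tendsto (fun M : ℕ =>
      (∫ xy, ∫ xneg : Fin M → α,
        -Real.log (Real.exp (S xy / τ) /
          (Real.exp (S xy / τ) + ∑ i : Fin M, Real.exp (S (xneg i, xy.2) / τ)))
        ∂(Measure.pi fun _ : Fin M => pdata) ∂ppos) - Real.log M) atTop
      (𝓝 (-(1 / τ) * (∫ xy, S xy ∂ppos) +
          ∫ x, Real.log (∫ x', Real.exp (S (x', x) / τ) ∂pdata) ∂pdata)) := by
  have hτ' : (0:ℝ) < 1 / τ := by positivity
  set a : ℝ := Real.exp (-(1 / τ)) with ha_def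
  set b : ℝ := Real.exp (1 / τ) with hb_def
  have ha : 0 < a := Real.exp_pos _
  have hb0 : 0 < b := Real.exp_pos _
  have hab : a ≤ b := Real.exp_le_exp.2 (by linarith)
  have hexp_le : ∀ p : α × α, Real.exp (S p / τ) ≤ b :=
    fun p => Real.exp_le_exp.2 ((div_le_div_iff_of_pos_right hτ).2 (abs_le.1 (hSb p)).2)
  have hexp_ge : ∀ p : α × α, a ≤ Real.exp (S p / τ) := by
    intro p
    apply Real.exp_le_exp.2
    have h1 : (-1 : ℝ) / τ ≤ S p / τ := (div_le_div_iff_of_pos_right hτ).2 (abs_le.1 (hSb p)).1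
    rw [neg_div] at h1
    exact h1
  -- measurability of the kernel
  have hgm : ∀ y : α, Measurable fun x' : α => Real.exp (S (x', y) / τ) := fun y =>
    Real.measurable_exp.comp ((hSm.comp (measurable_id.prodMk measurable_const)).div_const τ)
  have hgyint : ∀ y : α, Integrable (fun x' : α => Real.exp (S (x', y) / τ)) pdata := fun y =>
    aux_integrable_of_abs_le (hgm y).aestronglyMeasurable (C := b)
      (fun x' => by rw [abs_of_pos (Real.exp_pos _)]; exact hexp_le _)
  have hμmeas : Measurable fun y => auxMu pdata S τ y := by
    have hj : Measurable fun q : α × α => Real.exp (S (q.2, q.1) / τ) :=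
      Real.measurable_exp.comp ((hSm.comp measurable_swap).div_const τ)
    exact (hj.stronglyMeasurable.integral_prod_right').measurable
  have hμlb : ∀ y, a ≤ auxMu pdata S τ y := by
    intro y
    have h1 : ∫ _x' : α, a ∂pdata ≤ ∫ x', Real.exp (S (x', y) / τ) ∂pdata :=
      integral_mono (integrable_const a) (hgyint y) (fun x' => hexp_ge _)
    simpa [auxMu] using h1
  have hμub : ∀ y, auxMu pdata S τ y ≤ b := by
    intro y
    have h1 : ∫ x', Real.exp (S (x', y) / τ) ∂pdata ≤ ∫ _x' : α, b ∂pdata :=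
      integral_mono (hgyint y) (integrable_const b) (fun x' => hexp_le _)
    simpa [auxMu] using h1
  have hsint : Integrable (fun xy : α × α => S xy / τ) ppos :=
    aux_integrable_of_abs_le ((hSm.div_const τ).aestronglyMeasurable) (C := 1 / τ)
      (fun p => by
        rw [abs_div, abs_of_pos hτ]
        exact (div_le_div_iff_of_pos_right hτ).2 (hSb p))
  -- joint measurability of the normalized log term
  have hjointM : ∀ M : ℕ, Measurable fun q : (α × α) × (Fin M → α) =>
      Real.log ((Real.exp (S q.1 / τ) + ∑ i : Fin M, Real.exp (S (q.2 i, q.1.2) / τ)) / M) := by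
    intro M
    apply Real.measurable_log.comp
    apply Measurable.div_const
    apply Measurable.add
    · exact Real.measurable_exp.comp ((hSm.comp measurable_fst).div_const τ)
    · apply Finset.measurable_sum
      intro i _
      exact Real.measurable_exp.comp ((hSm.comp
        (((measurable_pi_apply i).comp measurable_snd).prodMk
          (measurable_snd.comp measurable_fst))).div_const τ)
  -- integrability over the negatives, for M ≥ 1
  have hM_facts : ∀ M : ℕ, 1 ≤ M → ∀ xy : α × α, ∀ xneg : Fin M → α,
      a ≤ (Real.exp (S xy / τ) + ∑ i : Fin M, Real.exp (S (xneg i, xy.2) / τ)) / M ∧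
      (Real.exp (S xy / τ) + ∑ i : Fin M, Real.exp (S (xneg i, xy.2) / τ)) / M ≤ 2 * b := by
    intro M hM xy xneg
    have hM0 : (0:ℝ) < M := by exact_mod_cast hM
    have hM1 : (1:ℝ) ≤ M := by exact_mod_cast hM
    have hT_lb : (M:ℝ) * a ≤ ∑ i : Fin M, Real.exp (S (xneg i, xy.2) / τ) := by
      have := Finset.card_nsmul_le_sum Finset.univ
        (fun i : Fin M => Real.exp (S (xneg i, xy.2) / τ)) a (fun i _ => hexp_ge _)
      simpa [nsmul_eq_mul] using this
    have hT_ub : ∑ i : Fin M, Real.exp (S (xneg i, xy.2) / τ) ≤ (M:ℝ) * b := by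
      have := Finset.sum_le_card_nsmul Finset.univ
        (fun i : Fin M => Real.exp (S (xneg i, xy.2) / τ)) b (fun i _ => hexp_le _)
      simpa [nsmul_eq_mul] using this
    have hA0 : 0 < Real.exp (S xy / τ) := Real.exp_pos _
    have hAb : Real.exp (S xy / τ) ≤ b := hexp_le _
    constructor
    · rw [le_div_iff₀ hM0]
      nlinarith
    · rw [div_le_iff₀ hM0]
      nlinarith
  have hInt1 : ∀ M : ℕ, 1 ≤ M → ∀ xy : α × α,
      Integrable (fun xneg : Fin M → α =>
        Real.log ((Real.exp (S xy / τ) + ∑ i : Fin M, Real.exp (S (xneg i, xy.2) / τ)) / M))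
        (Measure.pi fun _ : Fin M => pdata) := by
    intro M hM xy
    apply aux_integrable_of_abs_le
      (((hjointM M).comp measurable_prodMk_left).aestronglyMeasurable)
      (C := |Real.log a| + |Real.log (2 * b)|)
    intro xneg
    exact aux_abs_log_le ha (hM_facts M hM xy xneg).1 (hM_facts M hM xy xneg).2
  have hinner1meas : ∀ M : ℕ, StronglyMeasurable (auxInner pdata S τ M) := by
    intro M
    exact (hjointM M).stronglyMeasurable.integral_prod_right'
  have hinner1bd : ∀ M : ℕ, 1 ≤ M → ∀ xy : α × α,
      |auxInner pdata S τ M xy| ≤ |Real.log a| + |Real.log (2 * b)| := by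
    intro M hM xy
    have h := norm_integral_le_of_norm_le_const (μ := Measure.pi fun _ : Fin M => pdata)
      (C := |Real.log a| + |Real.log (2 * b)|)
      (f := fun xneg : Fin M → α =>
        Real.log ((Real.exp (S xy / τ) + ∑ i : Fin M, Real.exp (S (xneg i, xy.2) / τ)) / M))
      (Filter.Eventually.of_forall fun xneg => by
        rw [Real.norm_eq_abs]
        exact aux_abs_log_le ha (hM_facts M hM xy xneg).1 (hM_facts M hM xy xneg).2)
    rw [Real.norm_eq_abs] at h
    simpa [auxInner, measure_univ] using h
  have hinner1int : ∀ M : ℕ, 1 ≤ M → Integrable (auxInner pdata S τ M) ppos := fun M hM =>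
    aux_integrable_of_abs_le (hinner1meas M).aestronglyMeasurable (hinner1bd M hM)
  -- Claim A
  have claimA : ∀ M : ℕ, 1 ≤ M →
      (∫ xy, ∫ xneg : Fin M → α,
        -Real.log (Real.exp (S xy / τ) /
          (Real.exp (S xy / τ) + ∑ i : Fin M, Real.exp (S (xneg i, xy.2) / τ)))
        ∂(Measure.pi fun _ : Fin M => pdata) ∂ppos) - Real.log M
      = ∫ xy, (auxInner pdata S τ M xy - S xy / τ) ∂ppos := by
    intro M hM
    have hM0 : (0:ℝ) < M := by exact_mod_cast hM
    have step1 : ∀ xy : α × α,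
        (∫ xneg : Fin M → α,
          -Real.log (Real.exp (S xy / τ) /
            (Real.exp (S xy / τ) + ∑ i : Fin M, Real.exp (S (xneg i, xy.2) / τ)))
          ∂(Measure.pi fun _ : Fin M => pdata))
        = (auxInner pdata S τ M xy - S xy / τ) + Real.log M := by
      intro xy
      have hpt : ∀ xneg : Fin M → α,
          -Real.log (Real.exp (S xy / τ) /
            (Real.exp (S xy / τ) + ∑ i : Fin M, Real.exp (S (xneg i, xy.2) / τ)))
          = Real.log ((Real.exp (S xy / τ) + ∑ i : Fin M, Real.exp (S (xneg i, xy.2) / τ)) / M)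
            + (Real.log M - S xy / τ) := by
        intro xneg
        have hA : 0 < Real.exp (S xy / τ) := Real.exp_pos _
        have hT : 0 ≤ ∑ i : Fin M, Real.exp (S (xneg i, xy.2) / τ) :=
          Finset.sum_nonneg fun i _ => (Real.exp_pos _).le
        have hAT : 0 < Real.exp (S xy / τ) + ∑ i : Fin M, Real.exp (S (xneg i, xy.2) / τ) := by
          linarith
        rw [Real.log_div hA.ne' hAT.ne', Real.log_exp, Real.log_div hAT.ne' hM0.ne']
        ring
      rw [integral_congr_ae (Filter.Eventually.of_forall hpt),
        integral_add (hInt1 M hM xy) (integrable_const _), integral_const]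
      simp only [measure_univ, probReal_univ, smul_eq_mul, one_mul]
      rw [show auxInner pdata S τ M xy = ∫ xneg : Fin M → α,
          Real.log ((Real.exp (S xy / τ) + ∑ i : Fin M, Real.exp (S (xneg i, xy.2) / τ)) / M)
          ∂(Measure.pi fun _ : Fin M => pdata) from rfl]
      ring
    have hsubint : Integrable (fun xy : α × α => auxInner pdata S τ M xy - S xy / τ) ppos :=
      (hinner1int M hM).sub hsint
    rw [integral_congr_ae (Filter.Eventually.of_forall step1),
      integral_add hsubint (integrable_const _), integral_const]
    simp only [measure_univ, probReal_univ, smul_eq_mul, one_mul]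
    ring
  -- Claim B : quantitative LLN estimate
  have claimB : ∀ M : ℕ, 1 ≤ M → ∀ xy : α × α,
      |auxInner pdata S τ M xy - Real.log (auxMu pdata S τ xy.2)|
        ≤ (b / M + (1 + b ^ 2) / Real.sqrt M) / a := by
    intro M hM xy
    have hM0 : (0:ℝ) < M := by exact_mod_cast hM
    have hr0 : 0 < Real.sqrt M := Real.sqrt_pos.2 hM0
    have hr2 : Real.sqrt M * Real.sqrt M = (M:ℝ) := Real.mul_self_sqrt hM0.le
    set r : ℝ := Real.sqrt M with hr_def
    set ε : ℝ := 1 / r with hε_def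
    have hε : 0 < ε := by positivity
    set μ0 : ℝ := auxMu pdata S τ xy.2 with hμ0_def
    have hμ0a : a ≤ μ0 := hμlb _
    have hμ0b : μ0 ≤ b := hμub _
    set h : α → ℝ := fun x' => Real.exp (S (x', xy.2) / τ) - μ0 with hh_def
    have hhm : Measurable h := (hgm xy.2).sub measurable_const
    have hhb : ∀ x', |h x'| ≤ b := by
      intro x'
      have h1 := hexp_ge (x', xy.2)
      have h2 := hexp_le (x', xy.2)
      rw [hh_def]
      rw [abs_le]
      constructor
      · simp only
        linarith
      · simp only
        linarith
    have h0 : ∫ t, h t ∂pdata = 0 := by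
      rw [hh_def]
      rw [integral_sub (hgyint xy.2) (integrable_const _), integral_const]
      simp only [measure_univ, probReal_univ, smul_eq_mul, one_mul]
      rw [hμ0_def]
      simp [auxMu]
    set W : (Fin M → α) → ℝ := fun x => ∑ i, h (x i) with hW_def
    have hWm : Measurable W := Finset.measurable_sum _ fun i _ => hhm.comp (measurable_pi_apply i)
    have hWb : ∀ x, |W x| ≤ (M:ℝ) * b := by
      intro x
      calc |W x| ≤ ∑ i : Fin M, |h (x i)| := Finset.abs_sum_le_sum_abs _ _
      _ ≤ (M:ℝ) * b := by
        have := Finset.sum_le_card_nsmul Finset.univ (fun i : Fin M => |h (x i)|) b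
          (fun i _ => hhb _)
        simpa [nsmul_eq_mul] using this
    -- pointwise estimate
    have hptw : ∀ x : Fin M → α,
        |Real.log ((Real.exp (S xy / τ) + ∑ i : Fin M, Real.exp (S (x i, xy.2) / τ)) / M)
          - Real.log μ0|
        ≤ (b / M + ε) / a + (W x) ^ 2 * (1 / ((M:ℝ) ^ 2 * ε * a)) := by
      intro x
      set T : ℝ := ∑ i : Fin M, Real.exp (S (x i, xy.2) / τ) with hT_def
      set A : ℝ := Real.exp (S xy / τ) with hA_def
      have hu_lb : a ≤ (A + T) / M := (hM_facts M hM xy x).1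
      have step1 : |Real.log ((A + T) / M) - Real.log μ0| ≤ |(A + T) / M - μ0| / a :=
        aux_abs_log_sub_log_le ha hu_lb hμ0a
      have hTW : T = W x + (M:ℝ) * μ0 := by
        rw [hT_def, hW_def]
        rw [show (fun i : Fin M => Real.exp (S (x i, xy.2) / τ))
            = fun i : Fin M => h (x i) + μ0 from funext fun i => by rw [hh_def]; ring]
        rw [Finset.sum_add_distrib, Finset.sum_const, Finset.card_univ, Fintype.card_fin,
          nsmul_eq_mul]
      have hdiff : (A + T) / M - μ0 = A / M + W x / M := by
        rw [hTW]; field_simp; ring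
      have step2 : |(A + T) / M - μ0| ≤ b / M + |W x| / M := by
        rw [hdiff]
        calc |A / M + W x / M| ≤ |A / M| + |W x / M| := abs_add_le _ _
        _ = A / M + |W x| / M := by
          rw [abs_div, abs_div, abs_of_pos (Real.exp_pos _), abs_of_pos hM0]
        _ ≤ b / M + |W x| / M := by
          have : A / M ≤ b / M := by
            apply div_le_div_of_nonneg_right (hexp_le _) hM0.le
          linarith
      have step3 : |W x| / M ≤ ε + (W x) ^ 2 / ((M:ℝ) ^ 2 * ε) := by
        have h1 : |W x / M| ≤ ε + (W x / M) ^ 2 / ε := aux_abs_le_eps hε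
        rw [abs_div, abs_of_pos hM0] at h1
        rw [div_pow, div_div] at h1
        exact h1
      have comb : |(A + T) / M - μ0| / a
          ≤ (b / M + ε + (W x) ^ 2 / ((M:ℝ) ^ 2 * ε)) / a := by
        apply div_le_div_of_nonneg_right _ ha.le
        · linarith
      have heq : (b / M + ε + (W x) ^ 2 / ((M:ℝ) ^ 2 * ε)) / a
          = (b / M + ε) / a + (W x) ^ 2 * (1 / ((M:ℝ) ^ 2 * ε * a)) := by
        field_simp
      calc |Real.log ((A + T) / M) - Real.log μ0| ≤ |(A + T) / M - μ0| / a := step1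
      _ ≤ (b / M + ε + (W x) ^ 2 / ((M:ℝ) ^ 2 * ε)) / a := comb
      _ = _ := heq
    -- integrate the pointwise estimate
    have hW2int : Integrable (fun x : Fin M → α => (W x) ^ 2)
        (Measure.pi fun _ : Fin M => pdata) := by
      apply aux_integrable_of_abs_le ((hWm.pow_const 2).aestronglyMeasurable)
        (C := ((M:ℝ) * b) ^ 2)
      intro x
      rw [abs_of_nonneg (sq_nonneg _)]
      have h1 : |W x| ^ 2 ≤ ((M:ℝ) * b) ^ 2 := pow_le_pow_left₀ (abs_nonneg _) (hWb x) 2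
      simpa [sq_abs] using h1
    have hstart : auxInner pdata S τ M xy - Real.log μ0
        = ∫ x : Fin M → α,
            (Real.log ((Real.exp (S xy / τ) + ∑ i : Fin M, Real.exp (S (x i, xy.2) / τ)) / M)
              - Real.log μ0) ∂(Measure.pi fun _ : Fin M => pdata) := by
      rw [integral_sub (hInt1 M hM xy) (integrable_const _), integral_const]
      simp only [measure_univ, probReal_univ, smul_eq_mul, one_mul]
      rfl
    have habs : |auxInner pdata S τ M xy - Real.log μ0|
        ≤ ∫ x : Fin M → α, ((b / M + ε) / a + (W x) ^ 2 * (1 / ((M:ℝ) ^ 2 * ε * a)))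
            ∂(Measure.pi fun _ : Fin M => pdata) := by
      rw [hstart]
      calc |∫ x : Fin M → α, _ ∂(Measure.pi fun _ : Fin M => pdata)|
          ≤ ∫ x : Fin M → α,
            |Real.log ((Real.exp (S xy / τ) + ∑ i : Fin M, Real.exp (S (x i, xy.2) / τ)) / M)
              - Real.log μ0| ∂(Measure.pi fun _ : Fin M => pdata) := by
            rw [← Real.norm_eq_abs]
            exact (norm_integral_le_integral_norm _).trans_eq (by simp [Real.norm_eq_abs])
      _ ≤ _ := by
          apply integral_mono _ _ hptw
          · exact ((hInt1 M hM xy).sub (integrable_const _)).abs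
          · exact (integrable_const _).add (hW2int.mul_const _)
    have hval : ∫ x : Fin M → α, ((b / M + ε) / a + (W x) ^ 2 * (1 / ((M:ℝ) ^ 2 * ε * a)))
        ∂(Measure.pi fun _ : Fin M => pdata)
        = (b / M + ε) / a
          + (∫ x : Fin M → α, (W x) ^ 2 ∂(Measure.pi fun _ : Fin M => pdata))
            * (1 / ((M:ℝ) ^ 2 * ε * a)) := by
      rw [integral_add (integrable_const _) (hW2int.mul_const _), integral_const,
        integral_mul_const]
      simp only [measure_univ, probReal_univ, smul_eq_mul, one_mul]
    have hW2 : ∫ x : Fin M → α, (W x) ^ 2 ∂(Measure.pi fun _ : Fin M => pdata)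
        ≤ (M:ℝ) * b ^ 2 := by
      have := aux_integral_pi_sum_sq pdata M h hhm hb0.le hhb h0
      simpa [hW_def] using this
    have hfinal : (b / M + ε) / a
        + (∫ x : Fin M → α, (W x) ^ 2 ∂(Measure.pi fun _ : Fin M => pdata))
          * (1 / ((M:ℝ) ^ 2 * ε * a))
        ≤ (b / M + (1 + b ^ 2) / r) / a := by
      have h1 : (∫ x : Fin M → α, (W x) ^ 2 ∂(Measure.pi fun _ : Fin M => pdata))
          * (1 / ((M:ℝ) ^ 2 * ε * a)) ≤ ((M:ℝ) * b ^ 2) * (1 / ((M:ℝ) ^ 2 * ε * a)) := by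
        apply mul_le_mul_of_nonneg_right hW2 (by positivity)
      have h2 : (b / M + ε) / a + ((M:ℝ) * b ^ 2) * (1 / ((M:ℝ) ^ 2 * ε * a))
          = (b / M + (1 + b ^ 2) / r) / a := by
        rw [hε_def]
        rw [show ((M:ℝ)) = r * r from hr2.symm]
        field_simp
        ring
      linarith
    calc |auxInner pdata S τ M xy - Real.log μ0|
        ≤ _ := habs
    _ = _ := hval
    _ ≤ (b / M + (1 + b ^ 2) / r) / a := hfinal
  -- target rewriting
  have hlogμmeas : Measurable fun y => Real.log (auxMu pdata S τ y) :=
    Real.measurable_log.comp hμmeas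
  have hlogμb : ∀ y, |Real.log (auxMu pdata S τ y)| ≤ |Real.log a| + |Real.log b| :=
    fun y => aux_abs_log_le ha (hμlb y) (hμub y)
  have hcompint : Integrable (fun xy : α × α => Real.log (auxMu pdata S τ xy.2)) ppos :=
    aux_integrable_of_abs_le ((hlogμmeas.comp measurable_snd).aestronglyMeasurable)
      (fun xy => hlogμb _)
  have targetEq : (-(1 / τ) * (∫ xy, S xy ∂ppos) +
        ∫ x, Real.log (∫ x', Real.exp (S (x', x) / τ) ∂pdata) ∂pdata)
      = ∫ xy, (Real.log (auxMu pdata S τ xy.2) - S xy / τ) ∂ppos := by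
    rw [integral_sub hcompint hsint]
    have e1 : ∫ x, Real.log (∫ x', Real.exp (S (x', x) / τ) ∂pdata) ∂pdata
        = ∫ xy, Real.log (auxMu pdata S τ xy.2) ∂ppos := by
      have e0 : ∫ x, Real.log (auxMu pdata S τ x) ∂pdata
          = ∫ xy, Real.log (auxMu pdata S τ xy.2) ∂ppos := by
        rw [← hsnd, integral_map measurable_snd.aemeasurable]
        rw [hsnd]
        exact hlogμmeas.aestronglyMeasurable
      rw [← e0]
      simp [auxMu]
    have e2 : ∫ xy, S xy / τ ∂ppos = (1 / τ) * ∫ xy, S xy ∂ppos := by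
      rw [integral_div]; ring
    rw [e1, e2]; ring
  rw [targetEq, ← tendsto_sub_nhds_zero_iff]
  -- squeeze
  have hbound : ∀ᶠ M : ℕ in atTop,
      ‖((∫ xy, ∫ xneg : Fin M → α,
        -Real.log (Real.exp (S xy / τ) /
          (Real.exp (S xy / τ) + ∑ i : Fin M, Real.exp (S (xneg i, xy.2) / τ)))
        ∂(Measure.pi fun _ : Fin M => pdata) ∂ppos) - Real.log M)
        - ∫ xy, (Real.log (auxMu pdata S τ xy.2) - S xy / τ) ∂ppos‖
      ≤ (b / M + (1 + b ^ 2) / Real.sqrt M) / a := by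
    filter_upwards [eventually_ge_atTop 1] with M hM
    rw [claimA M hM]
    have hdiffeq : (∫ xy, (auxInner pdata S τ M xy - S xy / τ) ∂ppos)
        - ∫ xy, (Real.log (auxMu pdata S τ xy.2) - S xy / τ) ∂ppos
        = ∫ xy, (auxInner pdata S τ M xy - Real.log (auxMu pdata S τ xy.2)) ∂ppos := by
      have i1 : Integrable (fun xy : α × α => auxInner pdata S τ M xy - S xy / τ) ppos :=
        (hinner1int M hM).sub hsint
      have i2 : Integrable (fun xy : α × α => Real.log (auxMu pdata S τ xy.2) - S xy / τ) ppos :=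
        hcompint.sub hsint
      rw [← integral_sub i1 i2]
      congr 1
      funext xy
      ring
    rw [hdiffeq]
    have := norm_integral_le_of_norm_le_const (μ := ppos)
      (C := (b / M + (1 + b ^ 2) / Real.sqrt M) / a)
      (f := fun xy => auxInner pdata S τ M xy - Real.log (auxMu pdata S τ xy.2))
      (Filter.Eventually.of_forall fun xy => by
        rw [Real.norm_eq_abs]; exact claimB M hM xy)
    simpa [measure_univ] using this
  apply squeeze_zero_norm' hbound
  -- the bound tends to zero
  have t1 : Tendsto (fun M : ℕ => b / (M:ℝ)) atTop (𝓝 0) :=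
    tendsto_const_div_atTop_nhds_zero_nat b
  have t2 : Tendsto (fun M : ℕ => 1 / Real.sqrt M) atTop (𝓝 0) := by
    have h1 := (tendsto_const_div_atTop_nhds_zero_nat 1).sqrt
    rw [Real.sqrt_zero] at h1
    simpa [one_div, Real.sqrt_inv] using h1
  have t3 : Tendsto (fun M : ℕ => (b / (M:ℝ) + (1 + b ^ 2) * (1 / Real.sqrt M)) / a) atTop
      (𝓝 ((0 + (1 + b ^ 2) * 0) / a)) :=
    (t1.add (t2.const_mul _)).div_const a
  have t4 : ((0:ℝ) + (1 + b ^ 2) * 0) / a = 0 := by ring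
  rw [t4] at t3
  have : (fun M : ℕ => (b / (M:ℝ) + (1 + b ^ 2) / Real.sqrt M) / a)
      = fun M : ℕ => (b / (M:ℝ) + (1 + b ^ 2) * (1 / Real.sqrt M)) / a := by
    funext M
    rw [mul_one_div]
  rw [this]
  exact t3
/-- Asymptotics of the contrastive loss: for fixed `τ > 0`,
`L_contr(f;τ,M) − log M` converges, as `M → ∞`, to
`−(1/τ) E_{(x,y)∼p_pos}[f(x)·f(y)] + E_{x∼p_data}[log E_{x⁻∼p_data}[exp(f(x⁻)·f(x)/τ)]]`. -/
theorem contrLoss_tendsto_align_add_uniform {n m : ℕ} (τ : ℝ) (hτ : 0 < τ)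
    (pdata : Measure (Euc n)) (ppos : Measure (Euc n × Euc n))
    [IsProbabilityMeasure pdata] [IsProbabilityMeasure ppos]
    (hsym : ppos.map Prod.swap = ppos)
    (hfst : ppos.map Prod.fst = pdata) (hsnd : ppos.map Prod.snd = pdata)
    (f : Euc n → Sph m) (hf : Measurable f) :
    Tendsto (fun M : ℕ => contrLoss pdata ppos f τ M - Real.log M) atTop
      (𝓝 (-(1 / τ) * (∫ xy, ⟪(f xy.1 : Euc m), (f xy.2 : Euc m)⟫ ∂ppos) +
          ∫ x, Real.log (∫ x', Real.exp (⟪(f x' : Euc m), (f x : Euc m)⟫ / τ) ∂pdata) ∂pdata)) := by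
  have hFm : Measurable fun x : Euc n => (f x : Euc m) := measurable_subtype_coe.comp hf
  have hSm : Measurable fun p : Euc n × Euc n => ⟪(f p.1 : Euc m), (f p.2 : Euc m)⟫ :=
    (hFm.comp measurable_fst).inner (hFm.comp measurable_snd)
  have hnorm : ∀ x, ‖(f x : Euc m)‖ = 1 := fun x => by
    have h2 := (f x).2
    rwa [mem_sphere_zero_iff_norm] at h2
  have hSb : ∀ p : Euc n × Euc n, |⟪(f p.1 : Euc m), (f p.2 : Euc m)⟫| ≤ 1 := fun p => by
    calc |⟪(f p.1 : Euc m), (f p.2 : Euc m)⟫| ≤ ‖(f p.1 : Euc m)‖ * ‖(f p.2 : Euc m)‖ :=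
      abs_real_inner_le_norm _ _
    _ = 1 := by rw [hnorm, hnorm, one_mul]
  have key := aux_main pdata ppos hsnd
    (fun p : Euc n × Euc n => ⟪(f p.1 : Euc m), (f p.2 : Euc m)⟫) hSm hSb τ hτ
  simpa [contrLoss] using key
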